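/- Let γ½, δ, N be complex numbers and set γ := (γ½)². Define Num := γ½·(γ − 2(2N + 1)δ + (N + 1/2)² − 3)·(γ − Nδ − 3/4) and Den := (γ − 3(N + 1)δ − 3/4)·(γ − (N − 1/2)(2δ + N + 1/2))·γ½ (these are the numerator B¹_{n+3,n+1/2}·B⁰_{n+5/2,n} and denominator B¹_{n+3,n+3/2}·B¹_{n+5/2,n+1/2}·B⁰_{n+3/2,n} of the length-7 invariant J⁰_n, with N = N₆ = n + 1). If Num − Den ≠ 0, then γ − δ² − (2N + 1)δ − 3/4 ≠ 0 and 2(N − 1)(N + 3/2)·Den/(Num − Den) = [(γ − (N − 1/2)(2δ + N + 1/2))·(γ − 3(N + 1)δ − 3/4)] / [γ − δ² − (2N + 1)δ − 3/4]. -/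
import Mathlib

/-- The modified length-7 invariant `J̃⁰_n`: with `Num` and `Den` the numerator
`B¹_{n+3,n+1/2}·B⁰_{n+5/2,n}` and denominator
`B¹_{n+3,n+3/2}·B¹_{n+5/2,n+1/2}·B⁰_{n+3/2,n}` of `J⁰_n` (where `N = N₆ = n+1`
and `γ = (γ½)²`), if `Num − Den ≠ 0` then `γ − δ² − (2N+1)δ − 3/4 ≠ 0` and
`2(N−1)(N+3/2)·Den/(Num−Den)` equals the stated ratio. -/
theorem J0_tilde (g δ N : ℂ) (γ Num Den : ℂ)
    (hγ : γ = g ^ 2)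
    (hNum : Num = g * ((γ - 2 * (2 * N + 1) * δ + (N + 1/2) ^ 2 - 3) * (γ - N * δ - 3/4)))
    (hDen : Den = (γ - 3 * (N + 1) * δ - 3/4) * (γ - (N - 1/2) * (2 * δ + N + 1/2)) * g)
    (h : Num - Den ≠ 0) :
    γ - δ ^ 2 - (2 * N + 1) * δ - 3/4 ≠ 0 ∧
    2 * (N - 1) * (N + 3/2) * Den / (Num - Den) =
      (γ - (N - 1/2) * (2 * δ + N + 1/2)) * (γ - 3 * (N + 1) * δ - 3/4) /
        (γ - δ ^ 2 - (2 * N + 1) * δ - 3/4) := by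
  have key : Num - Den =
      2 * (N - 1) * (N + 3/2) * g * (γ - δ ^ 2 - (2 * N + 1) * δ - 3/4) := by
    subst hγ hNum hDen; ring
  rw [key] at h ⊢
  have hQ : γ - δ ^ 2 - (2 * N + 1) * δ - 3/4 ≠ 0 := fun hq => h (by rw [hq]; ring)
  have hc : 2 * (N - 1) * (N + 3/2) * g ≠ 0 := fun hc => h (by rw [hc]; ring)
  refine ⟨hQ, ?_⟩
  have hg : g ≠ 0 := fun hg => hc (by rw [hg]; ring)
  subst hDen
  rw [div_eq_div_iff h hQ]
  ring
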